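/- Let $R$ be an irreducible root system in a rational vector space $L$ that it spans. Then for every nonzero linear function $l \in L^*$ there exists a Weyl chamber $C \subset L$ of $R$ such that the closure $\overline{C}$ satisfies $\overline{C} \subset \{x \mid l(x) \geq 0\}$ and $\overline{C} \cap \{x \mid l(x) = 0\} = \{0\}$; in other words, $l$ is strictly positive on $\overline{C} \setminus \{0\}$. -/

import Mathlib

open scoped Classical


/-- An irreducible reduced (crystallographic) root system spanning a rational
vector space `L`, encoded via its finite set of roots and the coroot pairing. -/
structure RootSystemData (L : Type*) [AddCommGroup L] [Module ℚ L] where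
  roots : Finset L
  coroot : L → (L →ₗ[ℚ] ℚ)
  ne_zero : ∀ α ∈ roots, α ≠ 0
  span_eq_top : Submodule.span ℚ (roots : Set L) = ⊤
  coroot_self : ∀ α ∈ roots, coroot α α = 2
  coroot_int : ∀ α ∈ roots, ∀ β ∈ roots, ∃ n : ℤ, coroot α β = (n : ℚ)
  reflect_mem : ∀ α ∈ roots, ∀ β ∈ roots, β - coroot α β • α ∈ roots
  reduced : ∀ α ∈ roots, ∀ c : ℚ, c • α ∈ roots → c = 1 ∨ c = -1
  irreducible : ∀ S : Finset L, S ⊆ roots → S.Nonempty →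
    (∃ β ∈ roots, β ∉ S) → ∃ α ∈ S, ∃ β ∈ roots, β ∉ S ∧ coroot α β ≠ 0

/-- `Δ` is a base (system of simple roots) of the root system `R`:
a linearly independent set of roots such that every root is a nonnegative or
nonpositive integer combination of elements of `Δ`. -/
def IsBase {L : Type*} [AddCommGroup L] [Module ℚ L] (R : RootSystemData L)
    (Δ : Finset L) : Prop :=
  (↑Δ : Set L) ⊆ (R.roots : Set L) ∧
    LinearIndependent ℚ (fun x : (Δ : Set L) => (x : L)) ∧
    ∀ β ∈ R.roots,
      (∃ c : L → ℕ, β = ∑ α ∈ Δ, (c α : ℚ) • α) ∨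
      (∃ c : L → ℕ, β = -(∑ α ∈ Δ, (c α : ℚ) • α))

/-- The closure of the Weyl chamber corresponding to a base `Δ`: the closed
dominant cone of points pairing nonnegatively with all simple coroots. -/
def closedChamber {L : Type*} [AddCommGroup L] [Module ℚ L] (R : RootSystemData L)
    (Δ : Finset L) : Set L :=
  {x | ∀ α ∈ Δ, 0 ≤ R.coroot α x}


namespace RootSystemData

variable {L : Type*} [AddCommGroup L] [Module ℚ L] (R : RootSystemData L)

noncomputable def rmap (γ : L) : L →ₗ[ℚ] L := LinearMap.id - (R.coroot γ).smulRight γ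

lemma rmap_apply (γ x : L) : R.rmap γ x = x - R.coroot γ x • γ := rfl

lemma rmap_invol {γ : L} (hγ : R.coroot γ γ = 2) (x : L) : R.rmap γ (R.rmap γ x) = x := by
  simp only [rmap_apply, map_sub, map_smul, hγ, sub_smul, smul_smul, smul_eq_mul]
  module

noncomputable def sref (γ : L) (hγ : R.coroot γ γ = 2) : L ≃ₗ[ℚ] L :=
  LinearEquiv.ofLinear (R.rmap γ) (R.rmap γ)
    (by ext x; exact R.rmap_invol hγ x) (by ext x; exact R.rmap_invol hγ x)

lemma sref_apply (γ : L) (hγ : R.coroot γ γ = 2) (x : L) :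
    R.sref γ hγ x = x - R.coroot γ x • γ := rfl

lemma sref_symm_apply (γ : L) (hγ : R.coroot γ γ = 2) (x : L) :
    (R.sref γ hγ).symm x = x - R.coroot γ x • γ := rfl

/-- The subgroup of linear automorphisms preserving the set of roots. -/
noncomputable def wgroup : Subgroup (L ≃ₗ[ℚ] L) where
  carrier := {w | (∀ β ∈ R.roots, w β ∈ R.roots) ∧ (∀ β ∈ R.roots, w.symm β ∈ R.roots)}
  one_mem' := ⟨fun β hβ => hβ, fun β hβ => hβ⟩
  mul_mem' := by
    rintro a b ⟨ha1, ha2⟩ ⟨hb1, hb2⟩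
    exact ⟨fun β hβ => ha1 _ (hb1 _ hβ), fun β hβ => hb2 _ (ha2 _ hβ)⟩
  inv_mem' := by
    rintro a ⟨ha1, ha2⟩
    exact ⟨fun β hβ => ha2 _ hβ, fun β hβ => ha1 _ hβ⟩

lemma sref_mem_wgroup {γ : L} (hγ : γ ∈ R.roots) :
    R.sref γ (R.coroot_self γ hγ) ∈ R.wgroup := by
  constructor
  · intro β hβ; exact R.reflect_mem γ hγ β hβ
  · intro β hβ; exact R.reflect_mem γ hγ β hβ

lemma wgroup_finite : Finite R.wgroup := by
  have hinj : Function.Injective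
      (fun w : R.wgroup => (fun β : {x // x ∈ R.roots} =>
        (⟨w.1 β, w.2.1 β β.2⟩ : {x // x ∈ R.roots}))) := by
    intro w w' h
    have : ∀ β ∈ R.roots, w.1 β = w'.1 β := by
      intro β hβ
      have := congrFun h ⟨β, hβ⟩
      exact Subtype.ext_iff.mp this
    have : (w.1 : L →ₗ[ℚ] L) = (w'.1 : L →ₗ[ℚ] L) :=
      LinearMap.ext_on R.span_eq_top (fun x hx => this x hx)
    ext x
    exact LinearMap.congr_fun this x
  exact Finite.of_injective _ hinj

section Form

variable [Module.Finite ℚ L]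

open Module

noncomputable def form0 : L →ₗ[ℚ] L →ₗ[ℚ] ℚ :=
  LinearMap.mk₂ ℚ
    (fun x y => ∑ i, (Module.finBasis ℚ L).repr x i * (Module.finBasis ℚ L).repr y i)
    (by intro x x' y; simp [map_add, add_mul, Finset.sum_add_distrib])
    (by
      intro c x y
      simp only [map_smul, Finsupp.smul_apply, smul_eq_mul, Finset.mul_sum]
      exact Finset.sum_congr rfl fun i _ => by ring)
    (by intro x y y'; simp [map_add, mul_add, Finset.sum_add_distrib])
    (by
      intro c x y
      simp only [map_smul, Finsupp.smul_apply, smul_eq_mul, Finset.mul_sum]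
      exact Finset.sum_congr rfl fun i _ => by ring)

lemma form0_apply (x y : L) :
    form0 x y = ∑ i, (Module.finBasis ℚ L).repr x i * (Module.finBasis ℚ L).repr y i := rfl

lemma form0_symm (x y : L) : form0 x y = form0 (L := L) y x := by
  simp only [form0_apply]
  exact Finset.sum_congr rfl fun i _ => mul_comm _ _

lemma form0_self_nonneg (x : L) : 0 ≤ form0 x x := by
  rw [form0_apply]
  exact Finset.sum_nonneg fun i _ => mul_self_nonneg _

lemma form0_self_eq_zero {x : L} (h : form0 x x = 0) : x = 0 := by
  classical
  have hz : ∀ i ∈ (Finset.univ : Finset (Fin (finrank ℚ L))),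
      (Module.finBasis ℚ L).repr x i * (Module.finBasis ℚ L).repr x i = 0 := by
    rw [form0_apply] at h
    exact (Finset.sum_eq_zero_iff_of_nonneg (fun i _ => mul_self_nonneg _)).mp h
  have hrepr : (Module.finBasis ℚ L).repr x = 0 := by
    ext i
    simpa [mul_self_eq_zero] using hz i (Finset.mem_univ i)
  exact (Module.finBasis ℚ L).repr.map_eq_zero_iff.mp hrepr

noncomputable instance : Fintype R.wgroup := by
  have := R.wgroup_finite
  exact Fintype.ofFinite _

/-- The averaged, `wgroup`-invariant positive definite form. -/
noncomputable def form : L →ₗ[ℚ] L →ₗ[ℚ] ℚ :=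
  LinearMap.mk₂ ℚ (fun x y => ∑ w : R.wgroup, form0 (w.1 x) (w.1 y))
    (by intro x x' y; simp [map_add, Finset.sum_add_distrib])
    (by intro c x y; simp [map_smul, Finset.mul_sum])
    (by intro x y y'; simp [map_add, Finset.sum_add_distrib])
    (by intro c x y; simp [map_smul, Finset.mul_sum])

lemma form_apply (x y : L) : R.form x y = ∑ w : R.wgroup, form0 (w.1 x) (w.1 y) := rfl

lemma form_symm (x y : L) : R.form x y = R.form y x := by
  simp only [form_apply]
  exact Finset.sum_congr rfl fun w _ => form0_symm _ _

lemma form_self_nonneg (x : L) : 0 ≤ R.form x x := by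
  rw [form_apply]
  exact Finset.sum_nonneg fun w _ => form0_self_nonneg _

lemma form_self_pos {x : L} (hx : x ≠ 0) : 0 < R.form x x := by
  rcases lt_or_eq_of_le (R.form_self_nonneg x) with h | h
  · exact h
  exfalso; apply hx
  rw [form_apply] at h
  have h0 : form0 (((1 : R.wgroup)).1 x) (((1 : R.wgroup)).1 x) = 0 :=
    (Finset.sum_eq_zero_iff_of_nonneg
      (fun w _ => form0_self_nonneg ((w : R.wgroup).1 x))).mp h.symm 1 (Finset.mem_univ _)
  have : form0 x x = 0 := by simpa using h0
  exact form0_self_eq_zero this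

lemma form_invariant (u : L ≃ₗ[ℚ] L) (hu : u ∈ R.wgroup) (x y : L) :
    R.form (u x) (u y) = R.form x y := by
  rw [form_apply, form_apply]
  exact Fintype.sum_bijective (· * (⟨u, hu⟩ : R.wgroup))
    (Group.mulRight_bijective _) _ _ fun w => rfl

end Form

section Consequences

variable [Module.Finite ℚ L]

lemma neg_mem {β : L} (hβ : β ∈ R.roots) : -β ∈ R.roots := by
  have := R.reflect_mem β hβ β hβ
  rw [R.coroot_self β hβ] at this
  have h2 : β - (2 : ℚ) • β = -β := by module
  rwa [h2] at this

lemma coroot_mul_form (γ : L) (hγ : γ ∈ R.roots) (x : L) :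
    R.coroot γ x * R.form γ γ = 2 * R.form x γ := by
  have hself := R.coroot_self γ hγ
  have hinv := R.form_invariant _ (R.sref_mem_wgroup hγ) x γ
  rw [sref_apply, sref_apply, hself] at hinv
  have h2 : γ - (2:ℚ) • γ = -γ := by module
  rw [h2] at hinv
  simp only [map_sub, map_neg, map_smul, LinearMap.sub_apply, LinearMap.neg_apply,
    LinearMap.smul_apply, smul_eq_mul] at hinv
  have hs : R.form γ x = R.form x γ := R.form_symm γ x
  nlinarith [hinv]

lemma form_root_self_pos {γ : L} (hγ : γ ∈ R.roots) : 0 < R.form γ γ :=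
  R.form_self_pos (R.ne_zero γ hγ)

lemma coroot_pos_iff {γ δ : L} (hγ : γ ∈ R.roots) :
    0 < R.coroot γ δ ↔ 0 < R.form δ γ := by
  have h := R.coroot_mul_form γ hγ δ
  have hpos := R.form_root_self_pos hγ
  constructor
  · intro hc; nlinarith
  · intro hf; nlinarith

lemma coroot_eq_zero_iff {γ δ : L} (hγ : γ ∈ R.roots) :
    R.coroot γ δ = 0 ↔ R.form δ γ = 0 := by
  have h := R.coroot_mul_form γ hγ δ
  have hpos := R.form_root_self_pos hγ
  constructor
  · intro hc; nlinarith
  · intro hf; nlinarith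

lemma coroot_nonpos_iff {γ δ : L} (hγ : γ ∈ R.roots) :
    R.coroot γ δ ≤ 0 ↔ R.form δ γ ≤ 0 := by
  have h := R.coroot_mul_form γ hγ δ
  have hpos := R.form_root_self_pos hγ
  constructor
  · intro hc; nlinarith
  · intro hf; nlinarith

lemma cauchy_schwarz (x y : L) (hy : y ≠ 0) :
    (R.form x y) ^ 2 ≤ R.form x x * R.form y y := by
  have hyy : 0 < R.form y y := R.form_self_pos hy
  set r : ℚ := R.form x y / R.form y y with hr
  have hz : 0 ≤ R.form (x - r • y) (x - r • y) := R.form_self_nonneg _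
  have hexp : R.form (x - r • y) (x - r • y)
      = R.form x x - 2 * r * R.form x y + r ^ 2 * R.form y y := by
    simp only [map_sub, map_smul, LinearMap.sub_apply, LinearMap.smul_apply, smul_eq_mul]
    linear_combination r * (R.form_symm x y)
  rw [hexp] at hz
  have : r * R.form y y = R.form x y := by rw [hr]; exact div_mul_cancel₀ _ hyy.ne'
  nlinarith [hz, this]

lemma cauchy_schwarz_eq (x y : L) (hy : y ≠ 0)
    (heq : (R.form x y) ^ 2 = R.form x x * R.form y y) :
    x = (R.form x y / R.form y y) • y := by
  have hyy : 0 < R.form y y := R.form_self_pos hy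
  set r : ℚ := R.form x y / R.form y y with hr
  have hexp : R.form (x - r • y) (x - r • y)
      = R.form x x - 2 * r * R.form x y + r ^ 2 * R.form y y := by
    simp only [map_sub, map_smul, LinearMap.sub_apply, LinearMap.smul_apply, smul_eq_mul]
    linear_combination r * (R.form_symm x y)
  have hrr : r * R.form y y = R.form x y := by rw [hr]; exact div_mul_cancel₀ _ hyy.ne'
  have hz : R.form (x - r • y) (x - r • y) = 0 := by rw [hexp]; nlinarith [hrr]
  have : x - r • y = 0 := by
    by_contra hne
    exact absurd hz (ne_of_gt (R.form_self_pos hne))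
  have := sub_eq_zero.mp this
  rw [this]

/-- Key lemma: if `⟨γ^∨, δ⟩ > 0` for roots `γ δ`, then `δ = γ` or `δ - γ` is a root. -/
lemma root_sub_mem {γ δ : L} (hγ : γ ∈ R.roots) (hδ : δ ∈ R.roots)
    (hpos : 0 < R.coroot γ δ) : δ = γ ∨ δ - γ ∈ R.roots := by
  have hγγ := R.form_root_self_pos hγ
  have hδδ := R.form_root_self_pos hδ
  have hfδγ : 0 < R.form δ γ := (R.coroot_pos_iff hγ).mp hpos
  have hfγδ : 0 < R.form γ δ := by rwa [R.form_symm γ δ]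
  have hq : 0 < R.coroot δ γ := (R.coroot_pos_iff hδ).mpr hfγδ
  obtain ⟨m, hm⟩ := R.coroot_int γ hγ δ hδ
  obtain ⟨n, hn⟩ := R.coroot_int δ hδ γ hγ
  have hm1 : 1 ≤ m := by
    have : (0:ℚ) < (m:ℚ) := by rw [← hm]; exact hpos
    exact_mod_cast this
  have hn1 : 1 ≤ n := by
    have : (0:ℚ) < (n:ℚ) := by rw [← hn]; exact hq
    exact_mod_cast this
  have hrel1 := R.coroot_mul_form γ hγ δ
  have hrel2 := R.coroot_mul_form δ hδ γ
  have hcs := R.cauchy_schwarz δ γ (R.ne_zero γ hγ)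
  -- p*q ≤ 4
  have hpq : R.coroot γ δ * R.coroot δ γ ≤ 4 := by
    have hsym : R.form γ δ = R.form δ γ := R.form_symm γ δ
    have key : R.coroot γ δ * R.coroot δ γ * (R.form γ γ * R.form δ δ)
        = 4 * (R.form δ γ) ^ 2 := by nlinarith [hrel1, hrel2, hsym]
    nlinarith [key, hcs, mul_pos hγγ hδδ]
  by_cases hcase : m = 1 ∨ n = 1
  · rcases hcase with h1 | h1
    · right
      have : R.coroot γ δ = 1 := by rw [hm, h1]; norm_num
      have := R.reflect_mem γ hγ δ hδ
      rwa [‹R.coroot γ δ = 1›, one_smul] at this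
    · right
      have : R.coroot δ γ = 1 := by rw [hn, h1]; norm_num
      have hmem := R.reflect_mem δ hδ γ hγ
      rw [‹R.coroot δ γ = 1›, one_smul] at hmem
      have := R.neg_mem hmem
      have hsimp : -(γ - δ) = δ - γ := neg_sub γ δ
      rwa [hsimp] at this
  · left
    push_neg at hcase
    have hm2 : 2 ≤ m := by omega
    have hn2 : 2 ≤ n := by omega
    have h4 : 4 ≤ R.coroot γ δ * R.coroot δ γ := by
      rw [hm, hn]
      have : (4:ℚ) = ((2:ℤ):ℚ) * ((2:ℤ):ℚ) := by norm_num
      rw [this]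
      have := mul_le_mul (by exact_mod_cast hm2) (by exact_mod_cast hn2)
        (by norm_num) (by exact_mod_cast le_trans (by norm_num) hm2)
      exact_mod_cast this
    have hpq4 : R.coroot γ δ * R.coroot δ γ = 4 := le_antisymm hpq h4
    -- equality in Cauchy-Schwarz
    have heq : (R.form δ γ) ^ 2 = R.form δ δ * R.form γ γ := by
      have hsym : R.form γ δ = R.form δ γ := R.form_symm γ δ
      nlinarith [hrel1, hrel2, hpq4, hγγ, hδδ]
    have := R.cauchy_schwarz_eq δ γ (R.ne_zero γ hγ) (by rw [heq])
    set r : ℚ := R.form δ γ / R.form γ γ with hrdef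
    have hrpos : 0 < r := div_pos hfδγ hγγ
    have hred := R.reduced γ hγ r (by rw [← this]; exact hδ)
    rcases hred with h1 | h1
    · rw [this, h1, one_smul]
    · exfalso; rw [h1] at hrpos; norm_num at hrpos
end Consequences

section Regular

lemma exists_dual_ne_zero_on (s : Finset L) (hs : ∀ v ∈ s, v ≠ 0) :
    ∃ g : L →ₗ[ℚ] ℚ, ∀ v ∈ s, g v ≠ 0 := by
  classical
  induction s using Finset.induction_on with
  | empty => exact ⟨0, fun v hv => absurd hv (Finset.notMem_empty v)⟩
  | @insert v s hvs ih =>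
    obtain ⟨g, hg⟩ := ih (fun u hu => hs u (Finset.mem_insert_of_mem hu))
    have hv0 : v ≠ 0 := hs v (Finset.mem_insert_self v s)
    have : ¬ ∀ φ : Module.Dual ℚ L, φ v = 0 := by
      rw [Module.forall_dual_apply_eq_zero_iff]; exact hv0
    push_neg at this
    obtain ⟨h, hh⟩ := this
    obtain ⟨c, hc⟩ := Infinite.exists_notMem_finset
      ((insert v s).image (fun u => -g u / h u))
    refine ⟨g + c • h, fun u hu => ?_⟩
    have hcu : c ≠ -g u / h u := by
      intro heq
      exact hc (heq ▸ Finset.mem_image_of_mem (fun u => -g u / h u) hu)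
    simp only [LinearMap.add_apply, LinearMap.smul_apply, smul_eq_mul]
    rcases Finset.mem_insert.mp hu with rfl | hus
    · intro habs
      apply hcu
      field_simp
      linarith [habs]
    · by_cases hhu : h u = 0
      · simpa [hhu] using hg u hus
      · intro habs
        apply hcu
        field_simp
        linarith [habs]

theorem exists_regular (l : L →ₗ[ℚ] ℚ) :
    ∃ f : L →ₗ[ℚ] ℚ, ∀ γ ∈ R.roots,
      f γ ≠ 0 ∧ (0 < l γ → 0 < f γ) ∧ (l γ < 0 → f γ < 0) := by
  classical
  obtain ⟨g, hg⟩ := exists_dual_ne_zero_on (R.roots.filter (fun γ => l γ = 0))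
    (fun v hv => R.ne_zero v (Finset.mem_filter.mp hv).1)
  set N : ℚ := 1 + ∑ γ ∈ R.roots.filter (fun γ => l γ ≠ 0), |g γ| / |l γ| with hN
  have hterm : ∀ γ ∈ R.roots.filter (fun γ => l γ ≠ 0), (0:ℚ) ≤ |g γ| / |l γ| :=
    fun γ _ => div_nonneg (abs_nonneg _) (abs_nonneg _)
  have hNpos : 0 < N := by
    have := Finset.sum_nonneg hterm
    rw [hN]; linarith
  have hbound : ∀ γ ∈ R.roots, l γ ≠ 0 → |g γ| < N * |l γ| := by
    intro γ hγ hlγ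
    have hmem : γ ∈ R.roots.filter (fun γ => l γ ≠ 0) := Finset.mem_filter.mpr ⟨hγ, hlγ⟩
    have h1 : |g γ| / |l γ| ≤ N - 1 := by
      have := Finset.single_le_sum hterm hmem
      rw [hN]; linarith
    have hla : 0 < |l γ| := abs_pos.mpr hlγ
    have : |g γ| ≤ (N - 1) * |l γ| := by
      rw [div_le_iff₀ hla] at h1; linarith
    nlinarith
  refine ⟨N • l + g, fun γ hγ => ?_⟩
  have happ : (N • l + g) γ = N * l γ + g γ := by
    simp [LinearMap.add_apply, LinearMap.smul_apply, smul_eq_mul]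
  refine ⟨?_, ?_, ?_⟩
  · rw [happ]
    rcases lt_trichotomy (l γ) 0 with h | h | h
    · have := hbound γ hγ (ne_of_lt h)
      have habs : |l γ| = -(l γ) := abs_of_neg h
      have hga : g γ ≤ |g γ| := le_abs_self _
      intro h0; nlinarith
    · have : g γ ≠ 0 := hg γ (Finset.mem_filter.mpr ⟨hγ, h⟩)
      rw [h]; simpa using this
    · have := hbound γ hγ (ne_of_gt h)
      have habs : |l γ| = l γ := abs_of_pos h
      have hga : -(g γ) ≤ |g γ| := neg_le_abs _
      intro h0; nlinarith
  · intro h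
    rw [happ]
    have := hbound γ hγ (ne_of_gt h)
    have habs : |l γ| = l γ := abs_of_pos h
    have hga : -(g γ) ≤ |g γ| := neg_le_abs _
    nlinarith
  · intro h
    rw [happ]
    have := hbound γ hγ (ne_of_lt h)
    have habs : |l γ| = -(l γ) := abs_of_neg h
    have hga : g γ ≤ |g γ| := le_abs_self _
    nlinarith

end Regular

section Base

variable [Module.Finite ℚ L] (f : L →ₗ[ℚ] ℚ)

/-- Positive roots w.r.t. a regular functional `f`. -/
noncomputable def posRoots : Finset L := R.roots.filter (fun γ => 0 < f γ)

/-- Indecomposable positive roots. -/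
noncomputable def simples : Finset L :=
  @Finset.filter _ (fun γ => ¬ ∃ β ∈ R.posRoots f, ∃ δ ∈ R.posRoots f, γ = β + δ)
    (Classical.decPred _) (R.posRoots f)

lemma mem_posRoots {γ : L} : γ ∈ R.posRoots f ↔ γ ∈ R.roots ∧ 0 < f γ :=
  Finset.mem_filter

lemma mem_simples {γ : L} : γ ∈ R.simples f ↔ γ ∈ R.posRoots f ∧
    ¬ ∃ β ∈ R.posRoots f, ∃ δ ∈ R.posRoots f, γ = β + δ :=
  @Finset.mem_filter _ _ (Classical.decPred _) _ _

lemma simples_subset_roots : (R.simples f : Set L) ⊆ (R.roots : Set L) := by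
  intro γ hγ
  exact ((R.mem_posRoots f).mp ((R.mem_simples f).mp hγ).1).1

lemma mem_roots_pos_or_neg (hf : ∀ γ ∈ R.roots, f γ ≠ 0) {γ : L} (hγ : γ ∈ R.roots) :
    γ ∈ R.posRoots f ∨ -γ ∈ R.posRoots f := by
  rcases lt_or_gt_of_ne (hf γ hγ) with h | h
  · right
    refine (R.mem_posRoots f).mpr ⟨R.neg_mem hγ, ?_⟩
    rw [map_neg]; linarith
  · left; exact (R.mem_posRoots f).mpr ⟨hγ, h⟩

lemma simple_rep {β : L} (hs : β ∈ R.simples f) :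
    ∃ c : L → ℕ, β = ∑ α ∈ R.simples f, (c α : ℚ) • α := by
  classical
  refine ⟨fun α => if α = β then 1 else 0, ?_⟩
  have hcongr : ∀ α ∈ R.simples f,
      ((if α = β then (1:ℕ) else 0 : ℕ) : ℚ) • α = if α = β then α else 0 := by
    intro α _
    by_cases h : α = β <;> simp [h]
  rw [Finset.sum_congr rfl hcongr, Finset.sum_ite_eq' (R.simples f) β (fun α => α),
    if_pos hs]

lemma posRoots_rep_aux : ∀ n : ℕ, ∀ β ∈ R.posRoots f,
    ((R.posRoots f).filter (fun γ => f γ < f β)).card ≤ n →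
    ∃ c : L → ℕ, β = ∑ α ∈ R.simples f, (c α : ℚ) • α := by
  classical
  intro n
  induction n with
  | zero =>
    intro β hβ hcard
    by_cases hs : β ∈ R.simples f
    · exact R.simple_rep f hs
    · exfalso
      have hdec := ((R.mem_simples f).not.mp hs)
      rw [not_and_or] at hdec
      rcases hdec with h | h
      · exact h hβ
      · obtain ⟨β₁, hβ₁, β₂, hβ₂, hsum⟩ := not_not.mp h
        have hf1 : 0 < f β₁ := ((R.mem_posRoots f).mp hβ₁).2
        have hf2 : 0 < f β₂ := ((R.mem_posRoots f).mp hβ₂).2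
        have hlt : f β₁ < f β := by
          rw [hsum, map_add]; linarith
        have hmem : β₁ ∈ (R.posRoots f).filter (fun γ => f γ < f β) :=
          Finset.mem_filter.mpr ⟨hβ₁, hlt⟩
        have := Finset.card_pos.mpr ⟨β₁, hmem⟩
        omega
  | succ n ih =>
    intro β hβ hcard
    by_cases hs : β ∈ R.simples f
    · exact R.simple_rep f hs
    · have hdec := ((R.mem_simples f).not.mp hs)
      rw [not_and_or] at hdec
      rcases hdec with h | h
      · exact absurd hβ h
      · obtain ⟨β₁, hβ₁, β₂, hβ₂, hsum⟩ := not_not.mp h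
        have hf1 : 0 < f β₁ := ((R.mem_posRoots f).mp hβ₁).2
        have hf2 : 0 < f β₂ := ((R.mem_posRoots f).mp hβ₂).2
        have hlt1 : f β₁ < f β := by rw [hsum, map_add]; linarith
        have hlt2 : f β₂ < f β := by rw [hsum, map_add]; linarith
        have hsub : ∀ βᵢ ∈ R.posRoots f, f βᵢ < f β →
            ((R.posRoots f).filter (fun γ => f γ < f βᵢ)).card ≤ n := by
          intro βᵢ hβᵢ hltᵢ
          have hss : (R.posRoots f).filter (fun γ => f γ < f βᵢ) ⊂
              (R.posRoots f).filter (fun γ => f γ < f β) := by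
            constructor
            · intro γ hγ
              have := Finset.mem_filter.mp hγ
              exact Finset.mem_filter.mpr ⟨this.1, lt_trans this.2 hltᵢ⟩
            · intro hcontra
              have hmem : βᵢ ∈ (R.posRoots f).filter (fun γ => f γ < f β) :=
                Finset.mem_filter.mpr ⟨hβᵢ, hltᵢ⟩
              have := (Finset.mem_filter.mp (hcontra hmem)).2
              exact lt_irrefl _ this
          have := Finset.card_lt_card hss
          omega
        obtain ⟨c₁, hc₁⟩ := ih β₁ hβ₁ (hsub β₁ hβ₁ hlt1)
        obtain ⟨c₂, hc₂⟩ := ih β₂ hβ₂ (hsub β₂ hβ₂ hlt2)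
        refine ⟨fun α => c₁ α + c₂ α, ?_⟩
        have : ∀ α ∈ R.simples f,
            ((c₁ α + c₂ α : ℕ) : ℚ) • α = (c₁ α : ℚ) • α + (c₂ α : ℚ) • α := by
          intro α _
          push_cast
          rw [add_smul]
        rw [Finset.sum_congr rfl this, Finset.sum_add_distrib, ← hc₁, ← hc₂, hsum]

lemma posRoots_rep {β : L} (hβ : β ∈ R.posRoots f) :
    ∃ c : L → ℕ, β = ∑ α ∈ R.simples f, (c α : ℚ) • α :=
  R.posRoots_rep_aux f ((R.posRoots f).filter (fun γ => f γ < f β)).card β hβ le_rfl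

lemma roots_rep (hf : ∀ γ ∈ R.roots, f γ ≠ 0) {β : L} (hβ : β ∈ R.roots) :
    (∃ c : L → ℕ, β = ∑ α ∈ R.simples f, (c α : ℚ) • α) ∨
    (∃ c : L → ℕ, β = -(∑ α ∈ R.simples f, (c α : ℚ) • α)) := by
  rcases R.mem_roots_pos_or_neg f hf hβ with h | h
  · exact Or.inl (R.posRoots_rep f h)
  · obtain ⟨c, hc⟩ := R.posRoots_rep f h
    right
    exact ⟨c, by rw [← hc]; simp⟩

lemma simples_f_pos {α : L} (hα : α ∈ R.simples f) : 0 < f α :=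
  ((R.mem_posRoots f).mp ((R.mem_simples f).mp hα).1).2

/-- Distinct simple roots pair nonpositively. -/
lemma simples_coroot_nonpos (hf : ∀ γ ∈ R.roots, f γ ≠ 0) {α β : L}
    (hα : α ∈ R.simples f) (hβ : β ∈ R.simples f)
    (hne : β ≠ α) : R.coroot α β ≤ 0 := by
  by_contra hpos
  push_neg at hpos
  have hαr : α ∈ R.roots := R.simples_subset_roots f hα
  have hβr : β ∈ R.roots := R.simples_subset_roots f hβ
  rcases R.root_sub_mem hαr hβr hpos with heq | hmem
  · exact hne heq
  · have hαpos : α ∈ R.posRoots f := ((R.mem_simples f).mp hα).1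
    have hβpos : β ∈ R.posRoots f := ((R.mem_simples f).mp hβ).1
    rcases R.mem_roots_pos_or_neg f hf hmem with hη | hη
    · exact ((R.mem_simples f).mp hβ).2 ⟨α, hαpos, β - α, hη, by abel⟩
    · exact ((R.mem_simples f).mp hα).2 ⟨β, hβpos, -(β - α), hη, by abel⟩

lemma simples_form_nonpos (hf : ∀ γ ∈ R.roots, f γ ≠ 0) {α β : L}
    (hα : α ∈ R.simples f) (hβ : β ∈ R.simples f)
    (hne : β ≠ α) : R.form α β ≤ 0 := by
  rw [R.form_symm]
  exact (R.coroot_nonpos_iff (R.simples_subset_roots f hα)).mp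
    (R.simples_coroot_nonpos f hf hα hβ hne)

end Base

section LinIndep

variable [Module.Finite ℚ L] (f : L →ₗ[ℚ] ℚ)

lemma form_sum_sum {ι : Type*} (s t : Finset ι) (a b : ι → ℚ) (v w : ι → L) :
    R.form (∑ i ∈ s, a i • v i) (∑ j ∈ t, b j • w j)
      = ∑ i ∈ s, ∑ j ∈ t, a i * b j * R.form (v i) (w j) := by
  simp only [map_sum, map_smul, LinearMap.coe_sum, Finset.sum_apply,
    LinearMap.smul_apply, smul_eq_mul, Finset.mul_sum]
  rw [Finset.sum_comm]
  exact Finset.sum_congr rfl fun i _ => Finset.sum_congr rfl fun j _ => by ring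

lemma simples_linearIndependent (hf : ∀ γ ∈ R.roots, f γ ≠ 0) :
    LinearIndependent ℚ (fun x : ((R.simples f : Finset L) : Set L) => (x : L)) := by
  classical
  rw [Fintype.linearIndependent_iff]
  intro g hsum
  set A : Finset ((R.simples f : Finset L) : Set L) :=
    Finset.univ.filter (fun i => 0 < g i) with hA
  set B : Finset ((R.simples f : Finset L) : Set L) :=
    Finset.univ.filter (fun i => g i < 0) with hB
  set v : L := ∑ i ∈ A, g i • (i : L) with hv
  have hdisj : Disjoint A B := by
    rw [Finset.disjoint_left]
    intro i hiA hiB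
    have h1 := (Finset.mem_filter.mp hiA).2
    have h2 := (Finset.mem_filter.mp hiB).2
    linarith
  have hunion : ∑ i ∈ A, g i • (i : L) + ∑ i ∈ B, g i • (i : L) = 0 := by
    rw [← Finset.sum_union hdisj, ← hsum]
    apply Finset.sum_subset (Finset.subset_univ _)
    intro i _ hnot
    have hgi : g i = 0 := by
      rw [Finset.mem_union] at hnot
      push_neg at hnot
      have h1 := hnot.1
      have h2 := hnot.2
      rw [hA] at h1; rw [hB] at h2
      simp only [Finset.mem_filter, Finset.mem_univ, true_and, not_lt] at h1 h2
      linarith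
    rw [hgi, zero_smul]
  have hv2 : v = ∑ i ∈ B, (-g i) • (i : L) := by
    have hneg : ∑ i ∈ B, (-g i) • (i : L) = -∑ i ∈ B, g i • (i : L) := by
      rw [← Finset.sum_neg_distrib]
      exact Finset.sum_congr rfl fun i _ => by rw [neg_smul]
    rw [hv, hneg, eq_neg_iff_add_eq_zero]
    exact hunion
  have hmemS : ∀ i : ((R.simples f : Finset L) : Set L), (i : L) ∈ R.simples f :=
    fun i => Finset.mem_coe.mp i.2
  have hvv : R.form v v = ∑ i ∈ A, ∑ j ∈ B, g i * (-g j) * R.form (i : L) (j : L) := by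
    nth_rewrite 2 [hv2]
    rw [hv]
    exact R.form_sum_sum A B g (fun j => -g j) (fun i => (i : L)) (fun j => (j : L))
  have hform : R.form v v ≤ 0 := by
    rw [hvv]
    apply Finset.sum_nonpos
    intro i hi
    apply Finset.sum_nonpos
    intro j hj
    have hgi : 0 < g i := (Finset.mem_filter.mp hi).2
    have hgj : g j < 0 := (Finset.mem_filter.mp hj).2
    have hij : i ≠ j := by
      intro h; rw [h] at hgi; linarith
    have hne : (j : L) ≠ (i : L) := Subtype.coe_injective.ne hij.symm
    have hfij : R.form (i : L) (j : L) ≤ 0 :=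
      R.simples_form_nonpos f hf (hmemS i) (hmemS j) hne
    have hprod : 0 ≤ g i * -g j := mul_nonneg hgi.le (by linarith)
    calc g i * -g j * R.form (i : L) (j : L) ≤ g i * -g j * 0 := by
          exact mul_le_mul_of_nonneg_left hfij hprod
      _ = 0 := by ring
  have hv0 : v = 0 := by
    by_contra h
    exact absurd hform (not_le.mpr (R.form_self_pos h))
  have hA0 : A = ∅ := by
    by_contra hne
    have hfv : f v = ∑ i ∈ A, g i * f (i : L) := by
      rw [hv, map_sum]
      exact Finset.sum_congr rfl fun i _ => by rw [map_smul, smul_eq_mul]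
    have hpos : 0 < f v := by
      rw [hfv]
      apply Finset.sum_pos
      · intro i hi
        exact mul_pos (Finset.mem_filter.mp hi).2 (R.simples_f_pos f (hmemS i))
      · exact Finset.nonempty_of_ne_empty hne
    rw [hv0, map_zero] at hpos
    exact lt_irrefl _ hpos
  have hB0 : B = ∅ := by
    by_contra hne
    have hfv : f v = ∑ i ∈ B, (-g i) * f (i : L) := by
      rw [hv2, map_sum]
      exact Finset.sum_congr rfl fun i _ => by rw [map_smul, smul_eq_mul]
    have hpos : 0 < f v := by
      rw [hfv]
      apply Finset.sum_pos
      · intro i hi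
        have := (Finset.mem_filter.mp hi).2
        exact mul_pos (by linarith) (R.simples_f_pos f (hmemS i))
      · exact Finset.nonempty_of_ne_empty hne
    rw [hv0, map_zero] at hpos
    exact lt_irrefl _ hpos
  intro i
  by_contra hgi
  rcases lt_or_gt_of_ne hgi with h | h
  · have : i ∈ B := Finset.mem_filter.mpr ⟨Finset.mem_univ i, h⟩
    rw [hB0] at this
    exact Finset.notMem_empty i this
  · have : i ∈ A := Finset.mem_filter.mpr ⟨Finset.mem_univ i, h⟩
    rw [hA0] at this
    exact Finset.notMem_empty i this

lemma isBase_simples (hf : ∀ γ ∈ R.roots, f γ ≠ 0) : IsBase R (R.simples f) :=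
  ⟨R.simples_subset_roots f, R.simples_linearIndependent f hf,
    fun β hβ => R.roots_rep f hf hβ⟩

end LinIndep

section Chamber

variable [Module.Finite ℚ L] (f : L →ₗ[ℚ] ℚ)

lemma map_sum_smul (φ : L →ₗ[ℚ] ℚ) (s : Finset L) (c : L → ℚ) :
    φ (∑ α ∈ s, c α • α) = ∑ α ∈ s, c α * φ α := by
  rw [map_sum]
  exact Finset.sum_congr rfl fun α _ => by rw [map_smul, smul_eq_mul]

lemma form_sum_left (s : Finset L) (c : L → ℚ) (x : L) :
    R.form (∑ α ∈ s, c α • α) x = ∑ α ∈ s, c α * R.form α x := by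
  rw [map_sum, LinearMap.coe_sum, Finset.sum_apply]
  exact Finset.sum_congr rfl fun α _ => by rw [map_smul, LinearMap.smul_apply, smul_eq_mul]

lemma root_mem_span_simples (hf : ∀ γ ∈ R.roots, f γ ≠ 0) {β : L} (hβ : β ∈ R.roots) :
    β ∈ Submodule.span ℚ ((R.simples f : Finset L) : Set L) := by
  have hsum : ∀ c : L → ℕ, (∑ α ∈ R.simples f, (c α : ℚ) • α) ∈
      Submodule.span ℚ ((R.simples f : Finset L) : Set L) := by
    intro c
    apply Submodule.sum_mem
    intro α hα
    exact Submodule.smul_mem _ _ (Submodule.subset_span (Finset.mem_coe.mpr hα))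
  rcases R.roots_rep f hf hβ with ⟨c, hc⟩ | ⟨c, hc⟩
  · rw [hc]; exact hsum c
  · rw [hc]; exact Submodule.neg_mem _ (hsum c)

lemma simples_span_top (hf : ∀ γ ∈ R.roots, f γ ≠ 0) :
    Submodule.span ℚ ((R.simples f : Finset L) : Set L) = ⊤ := by
  rw [eq_top_iff, ← R.span_eq_top, Submodule.span_le]
  intro β hβ
  exact R.root_mem_span_simples f hf (Finset.mem_coe.mp hβ)

lemma coeff_unique (hf : ∀ γ ∈ R.roots, f γ ≠ 0) (a b : L → ℚ)
    (h : ∑ α ∈ R.simples f, a α • α = ∑ α ∈ R.simples f, b α • α) :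
    ∀ α ∈ R.simples f, a α = b α := by
  classical
  have hli := R.simples_linearIndependent f hf
  rw [Fintype.linearIndependent_iff] at hli
  have hzero : ∑ i : ((R.simples f : Finset L) : Set L), (a i - b i) • (i : L) = 0 := by
    have : ∀ i : ((R.simples f : Finset L) : Set L),
        (a i - b i) • (i : L) = a i • (i : L) - b i • (i : L) :=
      fun i => sub_smul _ _ _
    rw [Fintype.sum_congr _ _ this, Finset.sum_sub_distrib]
    have h1 : ∑ i : ((R.simples f : Finset L) : Set L), a i • (i : L)
        = ∑ α ∈ R.simples f, a α • α := Finset.sum_finset_coe (fun α => a α • α) _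
    have h2 : ∑ i : ((R.simples f : Finset L) : Set L), b i • (i : L)
        = ∑ α ∈ R.simples f, b α • α := Finset.sum_finset_coe (fun α => b α • α) _
    rw [h1, h2, h, sub_self]
  intro α hα
  have := hli (fun i => a i - b i) hzero ⟨α, Finset.mem_coe.mpr hα⟩
  linarith [this]

/-- In the closed chamber, coefficients over the simple roots are nonnegative. -/
lemma chamber_coeff_nonneg (hf : ∀ γ ∈ R.roots, f γ ≠ 0) {x : L} (c : L → ℚ)
    (hx : x = ∑ α ∈ R.simples f, c α • α)
    (hch : ∀ α ∈ R.simples f, 0 ≤ R.coroot α x) :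
    ∀ α ∈ R.simples f, 0 ≤ c α := by
  classical
  set A : Finset L := (R.simples f).filter (fun α => c α < 0) with hA
  set y : L := ∑ α ∈ A, c α • α with hy
  have hformyx : R.form y x ≤ 0 := by
    rw [hy, R.form_sum_left]
    apply Finset.sum_nonpos
    intro α hα
    have hαm := Finset.mem_filter.mp hα
    have hαr : α ∈ R.roots := R.simples_subset_roots f hαm.1
    have h1 : 0 ≤ R.coroot α x := hch α hαm.1
    have h2 := R.coroot_mul_form α hαr x
    have h3 : 0 < R.form α α := R.form_root_self_pos hαr
    have h4 : 0 ≤ R.form α x := by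
      rw [R.form_symm]; nlinarith
    nlinarith [hαm.2]
  have hxyz : x = y + ∑ α ∈ (R.simples f).filter (fun α => ¬ c α < 0), c α • α := by
    rw [hx, hy, Finset.sum_filter_add_sum_filter_not]
  have hformyz : 0 ≤ R.form y (∑ α ∈ (R.simples f).filter (fun α => ¬ c α < 0), c α • α) := by
    rw [hy, R.form_sum_sum A _ c c (fun α => α) (fun α => α)]
    apply Finset.sum_nonneg
    intro α hα
    apply Finset.sum_nonneg
    intro β hβ
    have hαm := Finset.mem_filter.mp hα
    have hβm := Finset.mem_filter.mp hβ
    have hne : β ≠ α := by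
      intro h
      rw [h] at hβm
      exact hβm.2 hαm.2
    have hfab : R.form α β ≤ 0 := R.simples_form_nonpos f hf hαm.1 hβm.1 hne
    have h1 : c α < 0 := hαm.2
    have h2 : 0 ≤ c β := not_lt.mp hβm.2
    have hkey := mul_nonneg (mul_nonneg (neg_nonneg.mpr h1.le) h2) (neg_nonneg.mpr hfab)
    nlinarith [hkey]
  have hyy : R.form y y ≤ 0 := by
    have : R.form y x = R.form y y + R.form y
        (∑ α ∈ (R.simples f).filter (fun α => ¬ c α < 0), c α • α) := by
      nth_rewrite 1 [hxyz]
      rw [map_add]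
    linarith
  have hy0 : y = 0 := by
    by_contra h
    exact absurd hyy (not_le.mpr (R.form_self_pos h))
  have hA0 : A = ∅ := by
    by_contra hne
    have hfy : f y = ∑ α ∈ A, c α * f α := by
      rw [hy]; exact RootSystemData.map_sum_smul f A c
    have hneg : 0 < ∑ α ∈ A, -(c α * f α) := by
      apply Finset.sum_pos
      · intro α hα
        have hαm := Finset.mem_filter.mp hα
        have := R.simples_f_pos f hαm.1
        nlinarith [hαm.2]
      · exact Finset.nonempty_of_ne_empty hne
    rw [Finset.sum_neg_distrib, ← hfy, hy0, map_zero] at hneg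
    norm_num at hneg
  intro α hα
  by_contra h
  have : α ∈ A := Finset.mem_filter.mpr ⟨hα, not_le.mp h⟩
  rw [hA0] at this
  exact Finset.notMem_empty α this

end Chamber

section Connect

variable [Module.Finite ℚ L] (f : L →ₗ[ℚ] ℚ)

lemma simple_ind_rep {δ : L} (hδ : δ ∈ R.simples f) :
    δ = ∑ α ∈ R.simples f, (if α = δ then (1:ℚ) else 0) • α := by
  classical
  have hcongr : ∀ α ∈ R.simples f,
      (if α = δ then (1:ℚ) else 0) • α = if α = δ then α else 0 := by
    intro α _
    by_cases h : α = δ <;> simp [h]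
  rw [Finset.sum_congr rfl hcongr, Finset.sum_ite_eq' (R.simples f) δ (fun α => α), if_pos hδ]

lemma ind_sum_one {δ : L} (hδ : δ ∈ R.simples f) :
    ∑ α ∈ R.simples f, (if α = δ then (1:ℚ) else 0) = 1 := by
  classical
  rw [Finset.sum_ite_eq' (R.simples f) δ (fun _ => (1:ℚ)), if_pos hδ]

/-- Connectivity induction: the support of any positive root lies entirely
inside `S` or entirely outside `S`, whenever `S` is a `form`-orthogonal part
of the simple roots. -/
lemma support_split (hf : ∀ γ ∈ R.roots, f γ ≠ 0) (S : Finset L)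
    (hS : S ⊆ R.simples f)
    (horth : ∀ α ∈ S, ∀ β ∈ R.simples f, β ∉ S → R.form α β = 0) :
    ∀ n : ℕ, ∀ β ∈ R.roots, ∀ c : L → ℕ,
      β = ∑ α ∈ R.simples f, (c α : ℚ) • α → (∑ α ∈ R.simples f, c α) = n →
      (∀ α ∈ R.simples f, c α ≠ 0 → α ∈ S) ∨ (∀ α ∈ R.simples f, c α ≠ 0 → α ∉ S) := by
  classical
  intro n
  induction n using Nat.strong_induction_on with
  | _ n ih =>
  intro β hβ c hrep hht
  by_cases h1 : ∀ α ∈ R.simples f, c α ≠ 0 → α ∈ S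
  · exact Or.inl h1
  by_cases h2 : ∀ α ∈ R.simples f, c α ≠ 0 → α ∉ S
  · exact Or.inr h2
  exfalso
  push_neg at h1 h2
  obtain ⟨α₁, hα₁s, hα₁c, hα₁S⟩ := h1
  obtain ⟨α₂, hα₂s, hα₂c, hα₂S⟩ := h2
  have hne12 : α₁ ≠ α₂ := fun h => hα₁S (h ▸ hα₂S)
  have hβne : β ≠ 0 := R.ne_zero β hβ
  have hββ : 0 < R.form β β := R.form_self_pos hβne
  have hsum : R.form β β = ∑ α ∈ R.simples f, (c α : ℚ) * R.form α β := by
    nth_rewrite 1 [hrep]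
    rw [R.form_sum_left]
  have hex : ∃ δ ∈ R.simples f, 0 < (c δ : ℚ) * R.form δ β := by
    by_contra hno
    push_neg at hno
    have : R.form β β ≤ 0 := by rw [hsum]; exact Finset.sum_nonpos hno
    linarith
  obtain ⟨δ, hδs, hδpos⟩ := hex
  have hδr : δ ∈ R.roots := R.simples_subset_roots f hδs
  have hcδ0 : (c δ : ℚ) ≠ 0 := by
    intro h; rw [h, zero_mul] at hδpos; exact lt_irrefl _ hδpos
  have hcδ : 0 < (c δ : ℚ) := lt_of_le_of_ne (Nat.cast_nonneg _) (Ne.symm hcδ0)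
  have hFδβ : 0 < R.form δ β := by nlinarith
  have hcor : 0 < R.coroot δ β :=
    (R.coroot_pos_iff hδr).mpr (by rw [R.form_symm]; exact hFδβ)
  -- β is not the simple root δ
  have hβδ : β ≠ δ := by
    intro h
    have huniq := R.coeff_unique f hf (fun α => (c α : ℚ))
      (fun α => if α = δ then (1:ℚ) else 0)
      (by rw [← hrep, ← R.simple_ind_rep f hδs, h])
    have e1 := huniq α₁ hα₁s
    have e2 := huniq α₂ hα₂s
    have hα₁δ : α₁ = δ := by
      by_contra hne
      simp only [if_neg hne] at e1
      exact hα₁c (by exact_mod_cast e1)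
    have hα₂δ : α₂ = δ := by
      by_contra hne
      simp only [if_neg hne] at e2
      exact hα₂c (by exact_mod_cast e2)
    exact hne12 (hα₁δ.trans hα₂δ.symm)
  rcases R.root_sub_mem hδr hβ hcor with heq | hmem
  · exact hβδ heq
  have hηr : β - δ ∈ R.roots := hmem
  have hηne : β - δ ≠ 0 := R.ne_zero _ hηr
  have hηrep : β - δ = ∑ α ∈ R.simples f, ((c α : ℚ) - (if α = δ then 1 else 0)) • α := by
    calc β - δ = (∑ α ∈ R.simples f, (c α : ℚ) • α)
        - (∑ α ∈ R.simples f, (if α = δ then (1:ℚ) else 0) • α) := by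
          rw [← hrep, ← R.simple_ind_rep f hδs]
      _ = ∑ α ∈ R.simples f, ((c α : ℚ) - (if α = δ then 1 else 0)) • α := by
          rw [← Finset.sum_sub_distrib]
          exact Finset.sum_congr rfl fun α _ => (sub_smul _ _ _).symm
  rcases R.roots_rep f hf hηr with ⟨m, hm⟩ | ⟨m, hm⟩
  swap
  · -- η = -(∑ m) : impossible unless support of c is {δ}
    have huniq := R.coeff_unique f hf
      (fun α => (c α : ℚ) - (if α = δ then 1 else 0)) (fun α => -(m α : ℚ))
      (by
        rw [← hηrep]
        rw [hm, ← Finset.sum_neg_distrib]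
        exact Finset.sum_congr rfl fun α _ => (neg_smul _ _).symm)
    have hzero : ∀ α ∈ R.simples f, α ≠ δ → c α = 0 := by
      intro α hα hαδ
      have := huniq α hα
      simp only [if_neg hαδ] at this
      have h1 : (0:ℚ) ≤ (c α : ℚ) := Nat.cast_nonneg _
      have h2 : (0:ℚ) ≤ (m α : ℚ) := Nat.cast_nonneg _
      have : (c α : ℚ) = 0 := by linarith
      exact_mod_cast this
    have hα₁δ : α₁ = δ := by
      by_contra hne; exact hα₁c (hzero α₁ hα₁s hne)
    have hα₂δ : α₂ = δ := by
      by_contra hne; exact hα₂c (hzero α₂ hα₂s hne)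
    exact hne12 (hα₁δ.trans hα₂δ.symm)
  · -- η = ∑ m positive: use induction
    have huniq := R.coeff_unique f hf (fun α => (m α : ℚ))
      (fun α => (c α : ℚ) - (if α = δ then 1 else 0)) (by rw [← hηrep, ← hm])
    have hmδ : (m δ : ℚ) = (c δ : ℚ) - 1 := by
      have h := huniq δ hδs
      simpa using h
    have hcδ1 : 1 ≤ c δ := by
      by_contra h
      have : c δ = 0 := by omega
      rw [this] at hcδ0
      exact hcδ0 (by norm_num)
    have hn1 : 1 ≤ n := by
      have h : c δ ≤ ∑ α ∈ R.simples f, c α :=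
        Finset.single_le_sum (fun α _ => Nat.zero_le _) hδs
      omega
    have hcast : (∑ α ∈ R.simples f, (m α : ℚ))
        = (∑ α ∈ R.simples f, (c α : ℚ)) - 1 := by
      rw [Finset.sum_congr rfl huniq, Finset.sum_sub_distrib, R.ind_sum_one f hδs]
    have hsm : ∑ α ∈ R.simples f, m α = n - 1 := by
      have hc2 : ((∑ α ∈ R.simples f, c α : ℕ) : ℚ) = (n : ℚ) := Nat.cast_inj.mpr hht
      have hq : ((∑ α ∈ R.simples f, m α + 1 : ℕ) : ℚ) = ((n : ℕ) : ℚ) := by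
        push_cast
        push_cast at hcast hc2
        linarith
      have h2 : ∑ α ∈ R.simples f, m α + 1 = n := by exact_mod_cast hq
      omega
    have hIH := ih (n - 1) (by omega) (β - δ) hηr m hm hsm
    -- common "mixed case" contradiction
    have hmixed : (∀ α ∈ R.simples f, m α ≠ 0 → R.form α δ = 0) → m δ = 0 → False := by
      intro hperp hmδ0
      have hFδη : R.form δ (β - δ) = 0 := by
        rw [R.form_symm]
        rw [hm, R.form_sum_left]
        apply Finset.sum_eq_zero
        intro α hα
        by_cases h : m α = 0
        · rw [h]; norm_num
        · rw [hperp α hα h, mul_zero]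
      have hcorη : R.coroot δ (β - δ) = 0 := by
        rw [R.coroot_eq_zero_iff hδr, R.form_symm]
        exact hFδη
      have hcor2 : R.coroot δ β = 2 := by
        have : R.coroot δ β = R.coroot δ (β - δ) + R.coroot δ δ := by
          rw [← map_add]
          congr 1
          abel
        rw [this, hcorη, R.coroot_self δ hδr]
        ring
      have hζr : β - (2:ℚ) • δ ∈ R.roots := by
        have := R.reflect_mem δ hδr β hβ
        rwa [hcor2] at this
      have hζrep : β - (2:ℚ) • δ
          = ∑ α ∈ R.simples f, ((m α : ℚ) - (if α = δ then 1 else 0)) • α := by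
        have hζη : β - (2:ℚ) • δ = (β - δ) - δ := by module
        rw [hζη]
        calc (β - δ) - δ = (∑ α ∈ R.simples f, (m α : ℚ) • α)
            - (∑ α ∈ R.simples f, (if α = δ then (1:ℚ) else 0) • α) := by
              rw [← hm, ← R.simple_ind_rep f hδs]
          _ = _ := by
              rw [← Finset.sum_sub_distrib]
              exact Finset.sum_congr rfl fun α _ => (sub_smul _ _ _).symm
      rcases R.roots_rep f hf hζr with ⟨k, hk⟩ | ⟨k, hk⟩
      · have huniq2 := R.coeff_unique f hf (fun α => (k α : ℚ))
          (fun α => (m α : ℚ) - (if α = δ then 1 else 0)) (by rw [← hζrep, ← hk])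
        have hthis := huniq2 δ hδs
        have h0 : (m δ : ℚ) = 0 := by exact_mod_cast hmδ0
        simp only [if_pos (rfl : δ = δ), h0, zero_sub, eq_self_iff_true, if_true] at hthis
        have hk0 : (0:ℚ) ≤ (k δ : ℚ) := Nat.cast_nonneg _
        linarith
      · have huniq2 := R.coeff_unique f hf
          (fun α => (m α : ℚ) - (if α = δ then 1 else 0)) (fun α => -(k α : ℚ))
          (by
            rw [← hζrep, hk, ← Finset.sum_neg_distrib]
            exact Finset.sum_congr rfl fun α _ => (neg_smul _ _).symm)
        have hmall : ∀ α ∈ R.simples f, (m α : ℚ) = 0 := by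
          intro α hα
          by_cases hαδ : α = δ
          · rw [hαδ]; exact_mod_cast hmδ0
          · have := huniq2 α hα
            simp only [if_neg hαδ, sub_zero] at this
            have h1 : (0:ℚ) ≤ (m α : ℚ) := Nat.cast_nonneg _
            have h2 : (0:ℚ) ≤ (k α : ℚ) := Nat.cast_nonneg _
            linarith
        apply hηne
        rw [hm]
        apply Finset.sum_eq_zero
        intro α hα
        rw [hmall α hα, zero_smul]
    rcases hIH with hL | hR
    · by_cases hδS : δ ∈ S
      · -- all support in S : contradicts α₁
        apply hα₁S
        by_cases hα₁δ : α₁ = δ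
        · rw [hα₁δ]; exact hδS
        · have := huniq α₁ hα₁s
          simp only [if_neg hα₁δ, sub_zero] at this
          have hm₁ : m α₁ ≠ 0 := by
            intro h
            rw [h] at this
            exact hα₁c (by exact_mod_cast this.symm)
          exact hL α₁ hα₁s hm₁
      · -- mixed : δ ∉ S, support of m in S
        apply hmixed
        · intro α hα hmα
          have hαS : α ∈ S := hL α hα hmα
          exact horth α hαS δ hδs hδS
        · by_contra h
          exact hδS (hL δ hδs h)
    · by_cases hδS : δ ∈ S
      · -- mixed : δ ∈ S, support of m outside S
        apply hmixed
        · intro α hα hmα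
          have hαS : α ∉ S := hR α hα hmα
          rw [R.form_symm]
          exact horth δ hδS α hα hαS
        · by_contra h
          exact (hR δ hδs h) hδS
      · -- all support outside S : contradicts α₂
        apply (hR α₂ hα₂s ?_) hα₂S
        by_cases hα₂δ : α₂ = δ
        · exfalso; exact hδS (hα₂δ ▸ hα₂S)
        · have := huniq α₂ hα₂s
          simp only [if_neg hα₂δ, sub_zero] at this
          intro h
          rw [h] at this
          exact hα₂c (by exact_mod_cast this.symm)

end Connect

section Final

variable [Module.Finite ℚ L] (f : L →ₗ[ℚ] ℚ)

lemma no_orthogonal_split (hf : ∀ γ ∈ R.roots, f γ ≠ 0) (S : Finset L)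
    (hS : S ⊆ R.simples f) (hSne : S.Nonempty)
    (hproper : ∃ β₀ ∈ R.simples f, β₀ ∉ S)
    (horth : ∀ α ∈ S, ∀ β ∈ R.simples f, β ∉ S → R.form α β = 0) : False := by
  classical
  obtain ⟨β₀, hβ₀s, hβ₀S⟩ := hproper
  set V1 := Submodule.span ℚ (S : Set L) with hV1
  have hV1orth : ∀ x ∈ V1, ∀ β ∈ R.simples f, β ∉ S → R.form x β = 0 := by
    intro x hx
    induction hx using Submodule.span_induction with
    | mem z hzS =>
      intro β hβ hβS
      exact horth z (Finset.mem_coe.mp hzS) β hβ hβS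
    | zero => intro β hβ hβS; simp
    | add z w hz hw ihz ihw =>
      intro β hβ hβS
      rw [map_add, LinearMap.add_apply, ihz β hβ hβS, ihw β hβ hβS, add_zero]
    | smul a z hz ihz =>
      intro β hβ hβS
      rw [map_smul, LinearMap.smul_apply, ihz β hβ hβS, smul_zero]
  have hβ₀V1 : β₀ ∉ V1 := by
    have hli := R.simples_linearIndependent f hf
    have himg : (S : Set L) = (fun x : ((R.simples f : Finset L) : Set L) => (x : L)) ''
        {i : ((R.simples f : Finset L) : Set L) | (i : L) ∈ S} := by
      ext z
      constructor
      · intro hz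
        have hzS : z ∈ S := Finset.mem_coe.mp hz
        exact ⟨⟨z, Finset.mem_coe.mpr (hS hzS)⟩, hzS, rfl⟩
      · rintro ⟨i, hi, rfl⟩
        exact Finset.mem_coe.mpr hi
    intro hmem
    have hni : (⟨β₀, Finset.mem_coe.mpr hβ₀s⟩ : ((R.simples f : Finset L) : Set L)) ∉
        {i : ((R.simples f : Finset L) : Set L) | (i : L) ∈ S} := hβ₀S
    have := hli.notMem_span_image hni
    rw [← himg] at this
    exact this hmem
  set T := R.roots.filter (fun γ => γ ∈ V1) with hT
  have hTsub : T ⊆ R.roots := Finset.filter_subset _ _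
  obtain ⟨α₀, hα₀S⟩ := hSne
  have hα₀simple : α₀ ∈ R.simples f := hS hα₀S
  have hTne : T.Nonempty := ⟨α₀, Finset.mem_filter.mpr
    ⟨R.simples_subset_roots f hα₀simple, Submodule.subset_span (Finset.mem_coe.mpr hα₀S)⟩⟩
  have hTproper : ∃ β ∈ R.roots, β ∉ T := by
    refine ⟨β₀, R.simples_subset_roots f hβ₀s, ?_⟩
    intro hmem
    exact hβ₀V1 (Finset.mem_filter.mp hmem).2
  obtain ⟨γ, hγT, β, hβr, hβT, hcne⟩ := R.irreducible T hTsub hTne hTproper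
  have hγr : γ ∈ R.roots := (Finset.mem_filter.mp hγT).1
  have hγV1 : γ ∈ V1 := (Finset.mem_filter.mp hγT).2
  apply hcne
  rw [R.coroot_eq_zero_iff hγr]
  have main : ∀ b ∈ R.roots, ∀ cb : L → ℕ,
      b = ∑ α ∈ R.simples f, (cb α : ℚ) • α → (b ∈ V1 ∨ R.form b γ = 0) := by
    intro b hb cb hbrep
    rcases R.support_split f hf S hS horth (∑ α ∈ R.simples f, cb α) b hb cb hbrep rfl
      with hin | hout
    · left
      rw [hbrep]
      apply Submodule.sum_mem
      intro α hα
      by_cases h : cb α = 0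
      · rw [h]; simp
      · exact Submodule.smul_mem _ _ (Submodule.subset_span (Finset.mem_coe.mpr (hin α hα h)))
    · right
      rw [hbrep, R.form_sum_left]
      apply Finset.sum_eq_zero
      intro α hα
      by_cases h : cb α = 0
      · rw [h]; norm_num
      · have hαNS : α ∉ S := hout α hα h
        have hform0 : R.form γ α = 0 := hV1orth γ hγV1 α hα hαNS
        rw [R.form_symm] at hform0
        rw [hform0, mul_zero]
  rcases R.roots_rep f hf hβr with ⟨cb, hcb⟩ | ⟨cb, hcb⟩
  · rcases main β hβr cb hcb with hin | hz
    · exact absurd (Finset.mem_filter.mpr ⟨hβr, hin⟩) hβT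
    · exact hz
  · have hnegβ : -β ∈ R.roots := R.neg_mem hβr
    have hnegrep : -β = ∑ α ∈ R.simples f, (cb α : ℚ) • α := by rw [hcb, neg_neg]
    rcases main (-β) hnegβ cb hnegrep with hin | hz
    · have hβV1 : β ∈ V1 := by
        have := Submodule.neg_mem V1 hin
        rwa [neg_neg] at this
      exact absurd (Finset.mem_filter.mpr ⟨hβr, hβV1⟩) hβT
    · have : R.form β γ = -R.form (-β) γ := by
        rw [map_neg, LinearMap.neg_apply, neg_neg]
      rw [this, hz, neg_zero]

end Final

end RootSystemData

/-- For every nonzero linear function `l` on `L`, there is a Weyl chamber `C`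
(given by its base `Δ`) whose closure is contained in `{x | l x ≥ 0}` and meets
`{x | l x = 0}` only at the origin. -/
theorem exists_chamber_strictly_positive {L : Type*} [AddCommGroup L] [Module ℚ L]
    (R : RootSystemData L) (l : L →ₗ[ℚ] ℚ) (hl : l ≠ 0) :
    ∃ Δ : Finset L, IsBase R Δ ∧
      closedChamber R Δ ⊆ {x | 0 ≤ l x} ∧
      closedChamber R Δ ∩ {x | l x = 0} = {0} := by
  classical
  haveI : Module.Finite ℚ L := ⟨⟨R.roots, R.span_eq_top⟩⟩
  obtain ⟨f, hfp⟩ := R.exists_regular l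
  have hf : ∀ γ ∈ R.roots, f γ ≠ 0 := fun γ h => (hfp γ h).1
  have hsign : ∀ α ∈ R.simples f, 0 ≤ l α := by
    intro α hα
    by_contra h
    push_neg at h
    have hαr : α ∈ R.roots := R.simples_subset_roots f hα
    have := (hfp α hαr).2.2 h
    have := R.simples_f_pos f hα
    linarith
  -- representation of chamber points
  have hrep : ∀ x : L, ∃ c : L → ℚ, ∑ α ∈ R.simples f, c α • α = x := by
    intro x
    have hx : x ∈ Submodule.span ℚ ((R.simples f : Finset L) : Set L) := by
      rw [R.simples_span_top f hf]; trivial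
    exact (Submodule.mem_span_finset.mp hx).imp fun _ h => h.2
  have hchamber_rep : ∀ x ∈ closedChamber R (R.simples f), ∃ c : L → ℚ,
      (∑ α ∈ R.simples f, c α • α = x) ∧ (∀ α ∈ R.simples f, 0 ≤ c α) := by
    intro x hx
    obtain ⟨c, hc⟩ := hrep x
    exact ⟨c, hc, R.chamber_coeff_nonneg f hf c hc.symm (fun α hα => hx α hα)⟩
  have hsubset : closedChamber R (R.simples f) ⊆ {x | 0 ≤ l x} := by
    intro x hx
    obtain ⟨c, hc, hnn⟩ := hchamber_rep x hx
    have : l x = ∑ α ∈ R.simples f, c α * l α := by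
      rw [← hc]; exact RootSystemData.map_sum_smul l _ c
    rw [Set.mem_setOf_eq, this]
    exact Finset.sum_nonneg fun α hα => mul_nonneg (hnn α hα) (hsign α hα)
  refine ⟨R.simples f, R.isBase_simples f hf, hsubset, ?_⟩
  ext x
  simp only [Set.mem_inter_iff, Set.mem_setOf_eq, Set.mem_singleton_iff]
  constructor
  · rintro ⟨hx, hlx⟩
    obtain ⟨c, hc, hnn⟩ := hchamber_rep x hx
    have hlsum : ∑ α ∈ R.simples f, c α * l α = 0 := by
      rw [← RootSystemData.map_sum_smul l _ c, hc, hlx]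
    have hterms0 : ∀ α ∈ R.simples f, c α * l α = 0 :=
      (Finset.sum_eq_zero_iff_of_nonneg
        (fun α hα => mul_nonneg (hnn α hα) (hsign α hα))).mp hlsum
    set S : Finset L := (R.simples f).filter (fun α => c α ≠ 0) with hSdef
    by_cases hSe : S = ∅
    · rw [← hc]
      apply Finset.sum_eq_zero
      intro α hα
      by_cases h : c α = 0
      · rw [h, zero_smul]
      · exact absurd (hSdef ▸ Finset.mem_filter.mpr ⟨hα, h⟩) (by rw [hSe]; exact Finset.notMem_empty α)
    · exfalso
      have hSne : S.Nonempty := Finset.nonempty_of_ne_empty hSe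
      have hSsub : S ⊆ R.simples f := Finset.filter_subset _ _
      have hproper : ∃ β₀ ∈ R.simples f, β₀ ∉ S := by
        by_contra hcon
        push_neg at hcon
        apply hl
        apply LinearMap.ext_on (R.simples_span_top f hf)
        intro z hz
        have hzs : z ∈ R.simples f := Finset.mem_coe.mp hz
        have hzS : z ∈ S := hcon z hzs
        have hcz : c z ≠ 0 := (Finset.mem_filter.mp hzS).2
        have := hterms0 z hzs
        have hlz : l z = 0 := by
          rcases mul_eq_zero.mp this with h | h
          · exact absurd h hcz
          · exact h
        simpa using hlz
      have horth : ∀ α ∈ S, ∀ β ∈ R.simples f, β ∉ S → R.form α β = 0 := by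
        intro α hαS β hβs hβS
        have hβr : β ∈ R.roots := R.simples_subset_roots f hβs
        have hcorx : R.coroot β x = ∑ γ ∈ R.simples f, c γ * R.coroot β γ := by
          rw [← hc]; exact RootSystemData.map_sum_smul (R.coroot β) _ c
        have hterms_nonpos : ∀ γ ∈ R.simples f, c γ * R.coroot β γ ≤ 0 := by
          intro γ hγs
          by_cases hγβ : γ = β
          · have hcβ : c β = 0 := by
              by_contra hcc
              exact hβS (Finset.mem_filter.mpr ⟨hβs, hcc⟩)
            rw [hγβ, hcβ, zero_mul]
          · have h1 : R.coroot β γ ≤ 0 := R.simples_coroot_nonpos f hf hβs hγs hγβ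
            have h2 : 0 ≤ c γ := hnn γ hγs
            nlinarith [mul_nonneg h2 (neg_nonneg.mpr h1)]
        have hsum_le : ∑ γ ∈ R.simples f, c γ * R.coroot β γ ≤ 0 :=
          Finset.sum_nonpos hterms_nonpos
        have hsum_ge : 0 ≤ ∑ γ ∈ R.simples f, c γ * R.coroot β γ := by
          rw [← hcorx]; exact hx β hβs
        have hsum0 : ∑ γ ∈ R.simples f, c γ * R.coroot β γ = 0 :=
          le_antisymm hsum_le hsum_ge
        have heach := (Finset.sum_eq_zero_iff_of_nonpos hterms_nonpos).mp hsum0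
        have hαs : α ∈ R.simples f := hSsub hαS
        have hterm := heach α hαs
        have hcα : c α ≠ 0 := (Finset.mem_filter.mp hαS).2
        have hcor0 : R.coroot β α = 0 := by
          rcases mul_eq_zero.mp hterm with h | h
          · exact absurd h hcα
          · exact h
        rw [← R.coroot_eq_zero_iff hβr]
        exact hcor0
      exact R.no_orthogonal_split f hf S hSsub hSne hproper horth
  · intro h
    subst h
    refine ⟨?_, map_zero l⟩
    intro α _
    rw [map_zero]
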